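/- Let $\omega_1,\dots,\omega_{n-1} > 0$ and fix $x = (x',x_n)$ with $\sum_{i<n}\omega_i^2 x_i^2 < x_n$. For $\xi$ with $\xi' \neq 0$ let $z_\pm(x,\xi)$ be the intersections of the paraboloid $\{z : \sum_{i<n}\omega_i^2 z_i^2 = z_n\}$ with the rays $\{x+t\xi : t>0\}$ and $\{x+t\xi : t<0\}$. Then for each $k \geq 1$ the function $J_k(x,\xi) = \frac{|\xi|^k}{|x-z_+(x,\xi)|^k} + (-1)^k\frac{|\xi|^k}{|x-z_-(x,\xi)|^k}$ agrees on $\{\xi : \xi' \neq 0\}$ with a polynomial in $\xi$ of degree at most $k$; consequently $\Delta_\xi^k J_k(x,\xi) = 0$ there. -/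

import Mathlib

open MvPolynomial


/-- Scaled inner product of the first `m` coordinates of vectors in `ℝ^{m+1}`:
`⟨x',ξ'⟩ = ∑ i<m, ω_i² x_i ξ_i`. -/
noncomputable def wipC {m : ℕ} (ω : Fin m → ℝ) (x ξ : Fin (m + 1) → ℝ) : ℝ :=
  ∑ i : Fin m, (ω i) ^ 2 * x i.castSucc * ξ i.castSucc

/-- The Euclidean norm on `Fin (m+1) → ℝ`. -/
noncomputable def enorm' {N : ℕ} (x : Fin N → ℝ) : ℝ := Real.sqrt (∑ i, (x i) ^ 2)

/-- The Laplacian `Δ f x = ∑ j, ∂²f/∂x_j² (x)`. -/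
noncomputable def lap {N : ℕ} (f : (Fin N → ℝ) → ℝ) : (Fin N → ℝ) → ℝ := fun x =>
  ∑ j : Fin N, fderiv ℝ (fun y => fderiv ℝ f y (Pi.single j 1)) x (Pi.single j 1)

noncomputable def evalD {N : ℕ} (p : MvPolynomial (Fin N) ℝ) (x : Fin N → ℝ) :
    (Fin N → ℝ) →L[ℝ] ℝ :=
  ∑ j : Fin N, eval x (pderiv j p) • ContinuousLinearMap.proj j

lemma evalD_apply {N : ℕ} (p : MvPolynomial (Fin N) ℝ) (x v : Fin N → ℝ) :
    evalD p x v = ∑ j, eval x (pderiv j p) * v j := by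
  simp [evalD]

lemma hasFDerivAt_eval {N : ℕ} (p : MvPolynomial (Fin N) ℝ) (x : Fin N → ℝ) :
    HasFDerivAt (fun y => eval y p) (evalD p x) x := by
  induction p using MvPolynomial.induction_on with
  | C a =>
      have : evalD (C a : MvPolynomial (Fin N) ℝ) x = 0 := by
        ext v; simp [evalD_apply, pderiv_C]
      rw [this]
      simpa using hasFDerivAt_const (eval (R := ℝ) x (C a)) x
  | add p q hp hq =>
      have : evalD (p + q) x = evalD p x + evalD q x := by
        ext v; simp [evalD_apply, map_add, add_mul, Finset.sum_add_distrib]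
      rw [this]
      exact (hp.add hq).congr_fderiv rfl |>.congr_of_eventuallyEq
        (Filter.Eventually.of_forall (fun y => by simp [map_add]))
  | mul_X p i hp =>
      have hXi : HasFDerivAt (fun y : Fin N → ℝ => y i)
          (ContinuousLinearMap.proj (R := ℝ) (φ := fun _ : Fin N => ℝ) i) x :=
        hasFDerivAt_apply i x
      have h := hp.mul hXi
      have heq : evalD (p * X i) x =
          eval x p • ContinuousLinearMap.proj i + x i • evalD p x := by
        have key : ∀ j, eval x (pderiv j (p * X i)) =
            eval x (pderiv j p) * x i + eval x p * (if j = i then 1 else 0) := by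
          intro j
          by_cases hj : j = i
          · subst hj; simp [pderiv_mul, pderiv_X_self]; ring
          · simp [pderiv_mul, pderiv_X_of_ne (Ne.symm hj), hj]; ring
        ext v
        simp only [evalD_apply, ContinuousLinearMap.add_apply, ContinuousLinearMap.smul_apply,
          ContinuousLinearMap.proj_apply, smul_eq_mul]
        have h1 : ∑ j : Fin N, eval x (pderiv j (p * X i)) * v j =
            ∑ j : Fin N, (eval x (pderiv j p) * x i * v j
              + eval x p * (if j = i then (1:ℝ) else 0) * v j) :=
          Finset.sum_congr rfl fun j _ => by rw [key j]; ring
        have h2 : ∑ j : Fin N, eval x p * (if j = i then (1:ℝ) else 0) * v j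
            = eval x p * v i := by
          rw [Finset.sum_eq_single i]
          · simp
          · intro j _ hj; simp [hj]
          · simp
        rw [h1, Finset.sum_add_distrib, h2, Finset.mul_sum, add_comm]
        congr 1
        exact Finset.sum_congr rfl fun j _ => by ring
      rw [heq]
      exact h.congr_of_eventuallyEq (Filter.Eventually.of_forall (fun y => by simp [map_mul]))

lemma fderiv_eval_single {N : ℕ} (p : MvPolynomial (Fin N) ℝ) (x : Fin N → ℝ) (j : Fin N) :
    fderiv ℝ (fun y => eval y p) x (Pi.single j 1) = eval x (pderiv j p) := by
  rw [(hasFDerivAt_eval p x).fderiv, evalD_apply]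
  rw [Finset.sum_eq_single j]
  · simp
  · intro i _ hi; simp [Pi.single_eq_of_ne hi]
  · simp

noncomputable def lapP {N : ℕ} (p : MvPolynomial (Fin N) ℝ) : MvPolynomial (Fin N) ℝ :=
  ∑ j : Fin N, pderiv j (pderiv j p)

lemma lap_eval {N : ℕ} (p : MvPolynomial (Fin N) ℝ) :
    lap (fun y => eval y p) = fun x => eval x (lapP p) := by
  funext x
  unfold lap lapP
  rw [map_sum]
  refine Finset.sum_congr rfl fun j _ => ?_
  have : (fun y => fderiv ℝ (fun z => eval z p) y (Pi.single j 1))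
      = fun y => eval y (pderiv j p) := funext fun y => fderiv_eval_single p y j
  rw [this, fderiv_eval_single]

lemma lap_congr_on {N : ℕ} {U : Set (Fin N → ℝ)} (hU : IsOpen U)
    {f g : (Fin N → ℝ) → ℝ} (h : ∀ y ∈ U, f y = g y) :
    ∀ y ∈ U, lap f y = lap g y := by
  intro y hy
  unfold lap
  refine Finset.sum_congr rfl fun j _ => ?_
  have hinner : ∀ z ∈ U, fderiv ℝ f z (Pi.single j 1) = fderiv ℝ g z (Pi.single j 1) := by
    intro z hz
    have : f =ᶠ[nhds z] g := Filter.eventuallyEq_of_mem (hU.mem_nhds hz) h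
    rw [this.fderiv_eq]
  have : (fun z => fderiv ℝ f z (Pi.single j 1)) =ᶠ[nhds y]
      (fun z => fderiv ℝ g z (Pi.single j 1)) :=
    Filter.eventuallyEq_of_mem (hU.mem_nhds hy) hinner
  rw [this.fderiv_eq]

lemma totalDegree_pderiv_le {N : ℕ} (p : MvPolynomial (Fin N) ℝ) (i : Fin N) :
    (pderiv i p).totalDegree ≤ p.totalDegree - 1 := by
  conv_lhs => rw [p.as_sum]
  rw [map_sum]
  refine (totalDegree_finset_sum _ _).trans (Finset.sup_le fun m hm => ?_)
  rw [pderiv_monomial]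
  by_cases hmi : m i = 0
  · rw [hmi]; simp
  · refine (totalDegree_monomial_le _ _).trans ?_
    have hsum : ((m - Finsupp.single i 1).sum fun _ => id) = (m.sum fun _ e => e) - 1 := by
      rw [Finsupp.sum_fintype _ _ (fun _ => rfl), Finsupp.sum_fintype _ _ (fun _ => rfl)]
      simp only [id]
      simp only [Finsupp.coe_tsub, Pi.sub_apply]
      rw [← Finset.add_sum_erase _ (fun j => m j - (Finsupp.single i 1 : Fin N →₀ ℕ) j)
            (Finset.mem_univ i),
          ← Finset.add_sum_erase _ (fun j => m j) (Finset.mem_univ i)]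
      have h2 : ∑ j ∈ Finset.univ.erase i, (m j - (Finsupp.single i 1 : Fin N →₀ ℕ) j)
          = ∑ j ∈ Finset.univ.erase i, m j := by
        refine Finset.sum_congr rfl fun j hj => ?_
        rw [Finsupp.single_apply, if_neg (Finset.ne_of_mem_erase hj).symm]; omega
      rw [h2, Finsupp.single_apply, if_pos rfl]
      omega
    rw [hsum]
    exact Nat.sub_le_sub_right (le_totalDegree hm) 1

lemma pderiv_eq_zero_of_totalDegree_eq_zero {N : ℕ} {p : MvPolynomial (Fin N) ℝ}
    (h : p.totalDegree = 0) (i : Fin N) : pderiv i p = 0 := by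
  rw [p.as_sum, map_sum]
  refine Finset.sum_eq_zero fun m hm => ?_
  have hm0 : m = 0 := Finsupp.ext fun j =>
    (totalDegree_eq_zero_iff _ p).1 h m hm j
  rw [hm0, pderiv_monomial]
  simp

lemma lapP_eq_zero_of_deg_le_one {N : ℕ} {p : MvPolynomial (Fin N) ℝ}
    (h : p.totalDegree ≤ 1) : lapP p = 0 := by
  unfold lapP
  refine Finset.sum_eq_zero fun j _ => ?_
  have h1 : (pderiv j p).totalDegree = 0 :=
    Nat.le_zero.1 ((totalDegree_pderiv_le p j).trans (by omega))
  exact pderiv_eq_zero_of_totalDegree_eq_zero h1 j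

lemma totalDegree_lapP_le {N : ℕ} (p : MvPolynomial (Fin N) ℝ) :
    (lapP p).totalDegree ≤ p.totalDegree - 2 := by
  unfold lapP
  refine (totalDegree_finset_sum _ _).trans (Finset.sup_le fun j _ => ?_)
  calc (pderiv j (pderiv j p)).totalDegree ≤ (pderiv j p).totalDegree - 1 :=
        totalDegree_pderiv_le _ j
    _ ≤ (p.totalDegree - 1) - 1 := Nat.sub_le_sub_right (totalDegree_pderiv_le p j) 1
    _ = p.totalDegree - 2 := by omega

noncomputable def Prec {σ : Type*} (B A : MvPolynomial σ ℝ) : ℕ → MvPolynomial σ ℝ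
  | 0 => C 2
  | 1 => B
  | (n + 2) => B * Prec B A (n + 1) - A * Prec B A n

lemma Prec_deg {σ : Type*} {B A : MvPolynomial σ ℝ}
    (hB : B.totalDegree ≤ 1) (hA : A.totalDegree ≤ 2) :
    ∀ n, (Prec B A n).totalDegree ≤ n
  | 0 => by simpa [Prec] using (totalDegree_C (2:ℝ) (σ := σ)).le
  | 1 => hB
  | (n + 2) => by
      have h1 := Prec_deg hB hA (n + 1)
      have h2 := Prec_deg hB hA n
      refine (totalDegree_sub _ _).trans (max_le ?_ ?_)
      · exact (totalDegree_mul _ _).trans (by omega)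
      · exact (totalDegree_mul _ _).trans (by omega)

lemma Prec_eval {σ : Type*} {B A : MvPolynomial σ ℝ} {ξ : σ → ℝ} {u v : ℝ}
    (hB : eval ξ B = u + v) (hA : eval ξ A = u * v) :
    ∀ n, eval ξ (Prec B A n) = u ^ n + v ^ n
  | 0 => by simp [Prec]; norm_num
  | 1 => by simp [Prec, hB]
  | (n + 2) => by
      have h1 := Prec_eval hB hA (n + 1)
      have h2 := Prec_eval hB hA n
      simp only [Prec, map_sub, map_mul, hB, hA, h1, h2]
      ring

lemma enorm'_smul {N : ℕ} (t : ℝ) (y : Fin N → ℝ) : enorm' (t • y) = |t| * enorm' y := by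
  unfold enorm'
  rw [show (∑ i, ((t • y) i) ^ 2) = t ^ 2 * ∑ i, (y i) ^ 2 by
    rw [Finset.mul_sum]; exact Finset.sum_congr rfl fun i _ => by simp [mul_pow]]
  rw [Real.sqrt_mul (sq_nonneg t), Real.sqrt_sq_eq_abs]

theorem stmt11 {m : ℕ} (ω : Fin m → ℝ) (x : Fin (m + 1) → ℝ) (hω : ∀ i, 0 < ω i)
    (hx : wipC ω x x < x (Fin.last m))
    (k : ℕ) (hk : 1 ≤ k) (zp zm : (Fin (m + 1) → ℝ) → (Fin (m + 1) → ℝ))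
    (hzp : ∀ ξ : Fin (m + 1) → ℝ, (∃ i : Fin m, ξ i.castSucc ≠ 0) →
      (∃ t > (0:ℝ), zp ξ = x + t • ξ) ∧ wipC ω (zp ξ) (zp ξ) = zp ξ (Fin.last m))
    (hzm : ∀ ξ : Fin (m + 1) → ℝ, (∃ i : Fin m, ξ i.castSucc ≠ 0) →
      (∃ t < (0:ℝ), zm ξ = x + t • ξ) ∧ wipC ω (zm ξ) (zm ξ) = zm ξ (Fin.last m))
    (J : (Fin (m + 1) → ℝ) → ℝ)
    (hJ : ∀ ξ : Fin (m + 1) → ℝ, (∃ i : Fin m, ξ i.castSucc ≠ 0) →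
      J ξ = enorm' ξ ^ k / enorm' (x - zp ξ) ^ k +
        (-1 : ℝ) ^ k * (enorm' ξ ^ k / enorm' (x - zm ξ) ^ k)) :
    ∃ p : MvPolynomial (Fin (m + 1)) ℝ, p.totalDegree ≤ k ∧
      (∀ ξ : Fin (m + 1) → ℝ, (∃ i : Fin m, ξ i.castSucc ≠ 0) →
        J ξ = MvPolynomial.eval ξ p) ∧
      (∀ ξ : Fin (m + 1) → ℝ, (∃ i : Fin m, ξ i.castSucc ≠ 0) →
        lap^[k] J ξ = 0) := by
  classical
  set c : ℝ := wipC ω x x - x (Fin.last m) with hc_def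
  have hc0 : c ≠ 0 := by
    have : c < 0 := by rw [hc_def]; linarith
    exact ne_of_lt this
  set Pb : MvPolynomial (Fin (m + 1)) ℝ :=
    (∑ i : Fin m, C (2 * ω i ^ 2 * x i.castSucc) * X i.castSucc) - X (Fin.last m) with hPb_def
  set Pa : MvPolynomial (Fin (m + 1)) ℝ :=
    ∑ i : Fin m, C (ω i ^ 2) * X i.castSucc ^ 2 with hPa_def
  set B : MvPolynomial (Fin (m + 1)) ℝ := C (-c⁻¹) * Pb with hB_def
  set A : MvPolynomial (Fin (m + 1)) ℝ := C c⁻¹ * Pa with hA_def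
  have hdegB : B.totalDegree ≤ 1 := by
    rw [hB_def]
    refine (totalDegree_mul _ _).trans ?_
    rw [totalDegree_C, zero_add, hPb_def]
    refine (totalDegree_sub _ _).trans (max_le ?_ ?_)
    · refine (totalDegree_finset_sum _ _).trans (Finset.sup_le fun i _ => ?_)
      refine (totalDegree_mul _ _).trans ?_
      rw [totalDegree_C, totalDegree_X]
    · rw [totalDegree_X]
  have hdegA : A.totalDegree ≤ 2 := by
    rw [hA_def]
    refine (totalDegree_mul _ _).trans ?_
    rw [totalDegree_C, zero_add, hPa_def]
    refine (totalDegree_finset_sum _ _).trans (Finset.sup_le fun i _ => ?_)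
    refine (totalDegree_mul _ _).trans ?_
    rw [totalDegree_C, totalDegree_X_pow]
  have hevalPb : ∀ ξ : Fin (m + 1) → ℝ,
      eval ξ Pb = 2 * wipC ω x ξ - ξ (Fin.last m) := by
    intro ξ
    rw [hPb_def]
    simp only [map_sub, map_sum, eval_mul, eval_C, eval_X, wipC, Finset.mul_sum]
    congr 1
    exact Finset.sum_congr rfl fun i _ => by ring
  have hevalPa : ∀ ξ : Fin (m + 1) → ℝ, eval ξ Pa = wipC ω ξ ξ := by
    intro ξ
    rw [hPa_def]
    simp only [map_sum, eval_mul, eval_C, eval_pow, eval_X, wipC]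
    exact Finset.sum_congr rfl fun i _ => by ring
  have expand : ∀ (ξ : Fin (m + 1) → ℝ) (t : ℝ), wipC ω (x + t • ξ) (x + t • ξ)
      = wipC ω x x + 2 * t * wipC ω x ξ + t ^ 2 * wipC ω ξ ξ := by
    intro ξ t
    simp only [wipC, Pi.add_apply, Pi.smul_apply, smul_eq_mul]
    rw [Finset.mul_sum, Finset.mul_sum, ← Finset.sum_add_distrib, ← Finset.sum_add_distrib]
    exact Finset.sum_congr rfl fun i _ => by ring
  -- the key agreement
  have hagree : ∀ ξ : Fin (m + 1) → ℝ, (∃ i : Fin m, ξ i.castSucc ≠ 0) →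
      J ξ = eval ξ (Prec B A k) := by
    intro ξ hξ
    obtain ⟨⟨tp, htp, hzpe⟩, hzpq⟩ := hzp ξ hξ
    obtain ⟨⟨tm, htm, hzme⟩, hzmq⟩ := hzm ξ hξ
    set a : ℝ := wipC ω ξ ξ with ha_def
    set b : ℝ := 2 * wipC ω x ξ - ξ (Fin.last m) with hb_def
    have hquad : ∀ t : ℝ, wipC ω (x + t • ξ) (x + t • ξ) = (x + t • ξ) (Fin.last m) →
        a * t ^ 2 + b * t + c = 0 := by
      intro t h
      rw [expand ξ t] at h
      have hlast : (x + t • ξ) (Fin.last m) = x (Fin.last m) + t * ξ (Fin.last m) := by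
        simp
      rw [hlast] at h
      rw [ha_def, hb_def, hc_def]
      linear_combination h
    have hqp : a * tp ^ 2 + b * tp + c = 0 := hquad tp (by rw [← hzpe]; exact hzpq)
    have hqm : a * tm ^ 2 + b * tm + c = 0 := hquad tm (by rw [← hzme]; exact hzmq)
    set u : ℝ := tp⁻¹ with hu_def
    set v : ℝ := tm⁻¹ with hv_def
    have hup : 0 < u := by positivity
    have hvn : v < 0 := inv_lt_zero.mpr htm
    have huv : u ≠ v := ne_of_gt (lt_trans hvn hup)
    have htp0 : tp ≠ 0 := ne_of_gt htp
    have htm0 : tm ≠ 0 := ne_of_lt htm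
    have hu : c * u ^ 2 + b * u + a = 0 := by
      have h1 : c * u ^ 2 + b * u + a = u ^ 2 * (a * tp ^ 2 + b * tp + c) := by
        rw [hu_def]; field_simp; ring
      rw [h1, hqp, mul_zero]
    have hv : c * v ^ 2 + b * v + a = 0 := by
      have h1 : c * v ^ 2 + b * v + a = v ^ 2 * (a * tm ^ 2 + b * tm + c) := by
        rw [hv_def]; field_simp; ring
      rw [h1, hqm, mul_zero]
    have hsum : c * (u + v) = -b := by
      have hne : u - v ≠ 0 := sub_ne_zero.mpr huv
      have h2 : (u - v) * (c * (u + v) + b) = 0 := by linear_combination hu - hv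
      rcases mul_eq_zero.1 h2 with h | h
      · exact absurd h hne
      · linarith
    have hprod : c * (u * v) = a := by linear_combination u * hsum - hu
    have hevalB : eval ξ B = u + v := by
      rw [hB_def, eval_mul, eval_C, hevalPb ξ, ← hb_def]
      field_simp
      linear_combination -hsum
    have hevalA : eval ξ A = u * v := by
      rw [hA_def, eval_mul, eval_C, hevalPa ξ, ← ha_def]
      field_simp
      linear_combination -hprod
    -- norms
    have hξpos : 0 < enorm' ξ := by
      obtain ⟨i, hi⟩ := hξ
      apply Real.sqrt_pos.mpr
      apply Finset.sum_pos' (fun j _ => sq_nonneg _)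
      exact ⟨i.castSucc, Finset.mem_univ _, by positivity⟩
    have hnp : enorm' (x - zp ξ) = tp * enorm' ξ := by
      rw [hzpe, show x - (x + tp • ξ) = (-tp) • ξ by ext j; simp, enorm'_smul,
        abs_of_neg (neg_neg_iff_pos.mpr htp), neg_neg]
    have hnm : enorm' (x - zm ξ) = -tm * enorm' ξ := by
      rw [hzme, show x - (x + tm • ξ) = (-tm) • ξ by ext j; simp, enorm'_smul,
        abs_of_pos (by linarith : (0:ℝ) < -tm)]
    have he0 : enorm' ξ ≠ 0 := ne_of_gt hξpos
    have h1 : enorm' ξ ^ k / (tp * enorm' ξ) ^ k = u ^ k := by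
      rw [mul_pow, hu_def, inv_pow]
      rw [div_eq_iff (by positivity)]
      field_simp
    have h2 : (-1:ℝ) ^ k * (enorm' ξ ^ k / (-tm * enorm' ξ) ^ k) = v ^ k := by
      have hrw : (-tm * enorm' ξ) ^ k = (-1) ^ k * (tm ^ k * enorm' ξ ^ k) := by
        rw [show -tm * enorm' ξ = -1 * (tm * enorm' ξ) by ring, mul_pow, mul_pow]
      rw [hrw, hv_def, inv_pow]
      have hne1 : ((-1:ℝ)) ^ k ≠ 0 := pow_ne_zero _ (by norm_num)
      field_simp
    rw [hJ ξ hξ, hnp, hnm, h1, h2, Prec_eval hevalB hevalA k]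
  refine ⟨Prec B A k, Prec_deg hdegB hdegA k, hagree, ?_⟩
  -- Laplacian part
  set U : Set (Fin (m + 1) → ℝ) := {ξ | ∃ i : Fin m, ξ i.castSucc ≠ 0} with hU_def
  have hopen : IsOpen U := by
    rw [hU_def, Set.setOf_exists]
    exact isOpen_iUnion fun i =>
      IsOpen.preimage (continuous_apply i.castSucc) isOpen_compl_singleton
  have hiter : ∀ j, ∀ ξ ∈ U, lap^[j] J ξ = eval ξ (lapP^[j] (Prec B A k)) := by
    intro j
    induction j with
    | zero => intro ξ hξ; exact hagree ξ hξ
    | succ j ih =>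
        intro ξ hξ
        rw [Function.iterate_succ_apply', Function.iterate_succ_apply']
        rw [lap_congr_on hopen ih ξ hξ, lap_eval]
  have hzero : lapP^[k] (Prec B A k) = 0 := by
    have hdeg : ∀ j, (lapP^[j] (Prec B A k)).totalDegree ≤ k - 2 * j := by
      intro j
      induction j with
      | zero => simpa using Prec_deg hdegB hdegA k
      | succ j ih =>
          rw [Function.iterate_succ_apply']
          exact (totalDegree_lapP_le _).trans (by omega)
    obtain ⟨j, rfl⟩ : ∃ j, k = j + 1 := ⟨k - 1, by omega⟩
    rw [Function.iterate_succ_apply',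
      lapP_eq_zero_of_deg_le_one ((hdeg j).trans (by omega))]
  intro ξ hξ
  rw [hiter k ξ hξ, hzero, map_zero]
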